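/- Specialization of even symplectic characters: let λ be a partition of length ≤ n with λ₁ ≤ r, and Sp_{2n}(λ; x₁,…,xₙ) the symplectic Schur function (Weyl character of Sp(2n)). Then (x₁⋯xₙ)^r Sp_{2n}(λ; x₁,…,xₙ) is a polynomial in x₁,…,xₙ, and its evaluation at x₁ = 0 equals (x₂⋯xₙ)^r Sp_{2(n-1)}((λ₂,…,λₙ); x₂,…,xₙ) if λ₁ = r, and 0 if λ₁ < r. -/

import Mathlib

set_option linter.unreachableTactic false
set_option linter.unusedTactic false
set_option maxHeartbeats 1000000

open MvPolynomial

/-- The symplectic (even) bialternant matrix: `(i,j)` entry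
`xᵢ^{λⱼ+n+1-j} - xᵢ^{-(λⱼ+n+1-j)}` (with `1`-based `i, j`). -/
noncomputable def spEvenMat (n : ℕ) {K : Type*} [Field K]
    (lam : Fin n → ℕ) (x : Fin n → K) : Matrix (Fin n) (Fin n) K :=
  Matrix.of fun i j =>
    x i ^ ((lam j : ℤ) + n - (j : ℕ)) - x i ^ (-((lam j : ℤ) + n - (j : ℕ)))

/-- The symplectic Schur function `Sp_{2n}(λ; x₁,…,xₙ)` (Weyl character of `Sp(2n)`). -/
noncomputable def spEven (n : ℕ) {K : Type*} [Field K]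
    (lam : Fin n → ℕ) (x : Fin n → K) : K :=
  Matrix.det (spEvenMat n lam x) / Matrix.det (spEvenMat n (fun _ => 0) x)


namespace Sp13

variable {K : Type*} [Field K]

/-- exponent `λⱼ + m - j`. -/
def sEE (m : ℕ) (lam : Fin m → ℕ) (j : Fin m) : ℕ := lam j + (m - (j : ℕ))

/-- The cleared bialternant matrix, entries `Xᵢ^(N+Eⱼ) - Xᵢ^(N-Eⱼ)`. -/
noncomputable def sA (m N : ℕ) (lam : Fin m → ℕ) (K : Type*) [Field K] :
    Matrix (Fin m) (Fin m) (MvPolynomial (Fin m) K) :=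
  Matrix.of fun i j => X i ^ (N + sEE m lam j) - X i ^ (N - sEE m lam j)

noncomputable def sdet (m N : ℕ) (lam : Fin m → ℕ) (K : Type*) [Field K] :
    MvPolynomial (Fin m) K := (sA m N lam K).det

lemma dvd_det_of_row {R : Type*} [CommRing R] {m : ℕ} (M : Matrix (Fin m) (Fin m) R)
    (i : Fin m) {d : R} (h : ∀ k, d ∣ M i k) : d ∣ M.det := by
  classical
  choose v hv using h
  have hM : M = M.updateRow i (d • v) := by
    rw [show d • v = M i from ?_, Matrix.updateRow_eq_self]
    funext k
    simp only [Pi.smul_apply, smul_eq_mul]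
    exact (hv k).symm
  refine ⟨(M.updateRow i v).det, ?_⟩
  conv_lhs => rw [hM]
  rw [Matrix.det_updateRow_smul]

lemma rowsDvd (m N : ℕ) (lam : Fin m → ℕ) (hNE : ∀ j, sEE m lam j ≤ N) :
    (∏ i, (X i ^ 2 - 1)) ∣ sdet m N lam K := by
  classical
  have hfac : ∀ i j, sA m N lam K i j =
      (X i ^ 2 - 1) * (X i ^ (N - sEE m lam j) * ∑ t ∈ Finset.range (sEE m lam j), (X i ^ 2) ^ t) := by
    intro i j
    have hgeo := geom_sum_mul (X i ^ 2 : MvPolynomial (Fin m) K) (sEE m lam j)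
    have hpow : (X i ^ 2 : MvPolynomial (Fin m) K) ^ (sEE m lam j) * X i ^ (N - sEE m lam j)
        = X i ^ (N + sEE m lam j) := by
      rw [← pow_mul, ← pow_add]
      congr 1
      have := hNE j; omega
    calc sA m N lam K i j = X i ^ (N + sEE m lam j) - X i ^ (N - sEE m lam j) := rfl
      _ = _ := by linear_combination (-1 : MvPolynomial (Fin m) K) * hpow
        - (X i ^ (N - sEE m lam j)) * hgeo
  have : sdet m N lam K = (∏ i, (X i ^ 2 - 1)) *
      (Matrix.of fun i j => X i ^ (N - sEE m lam j) *
        ∑ t ∈ Finset.range (sEE m lam j), (X i ^ 2) ^ t).det := by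
    rw [← Matrix.det_mul_column]
    unfold sdet
    congr 1
    funext i j
    simpa [Matrix.of_apply] using hfac i j
  exact ⟨_, this⟩

lemma p1Dvd (m N : ℕ) (lam : Fin m → ℕ) {i j : Fin m} (hij : i ≠ j) :
    (X i - X j : MvPolynomial (Fin m) K) ∣ sdet m N lam K := by
  classical
  set A := sA m N lam K
  have hdet : (A.updateRow i (A i + (-1 : MvPolynomial (Fin m) K) • A j)).det = A.det :=
    Matrix.det_updateRow_add_smul_self A hij (-1)
  rw [show sdet m N lam K = A.det from rfl, ← hdet]
  apply dvd_det_of_row _ i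
  intro k
  rw [Matrix.updateRow_self]
  have : (A i + (-1 : MvPolynomial (Fin m) K) • A j) k
      = (X i ^ (N + sEE m lam k) - X j ^ (N + sEE m lam k))
        - (X i ^ (N - sEE m lam k) - X j ^ (N - sEE m lam k)) := by
    simp [A, sA, Matrix.of_apply]
    ring
  rw [this]
  exact dvd_sub (sub_dvd_pow_sub_pow _ _ _) (sub_dvd_pow_sub_pow _ _ _)

lemma p2Dvd (m N : ℕ) (lam : Fin m → ℕ) (hNE : ∀ j, sEE m lam j ≤ N)
    {i j : Fin m} (hij : i ≠ j) :
    (X i * X j - 1 : MvPolynomial (Fin m) K) ∣ sdet m N lam K := by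
  classical
  set A := sA m N lam K
  have hdet : (A.updateRow i (A i + (X i ^ (2*N) : MvPolynomial (Fin m) K) • A j)).det = A.det :=
    Matrix.det_updateRow_add_smul_self A hij _
  rw [show sdet m N lam K = A.det from rfl, ← hdet]
  apply dvd_det_of_row _ i
  intro k
  rw [Matrix.updateRow_self]
  set p := N + sEE m lam k with hp
  set q := N - sEE m lam k with hq
  have hpq : q + p = 2*N := by have := hNE k; omega
  have : (A i + (X i ^ (2*N) : MvPolynomial (Fin m) K) • A j) k
      = X i ^ q * ((X i * X j) ^ p - 1) - X i ^ p * ((X i * X j) ^ q - 1) := by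
    simp only [A, sA, Pi.add_apply, Pi.smul_apply, smul_eq_mul, Matrix.of_apply, ← hp, ← hq]
    rw [mul_pow, mul_pow, ← hpq, pow_add]
    ring
  rw [this]
  have h1 : (X i * X j - 1 : MvPolynomial (Fin m) K) ∣ ((X i * X j) ^ p - 1) := by
    simpa using sub_dvd_pow_sub_pow (X i * X j : MvPolynomial (Fin m) K) 1 p
  have h2 : (X i * X j - 1 : MvPolynomial (Fin m) K) ∣ ((X i * X j) ^ q - 1) := by
    simpa using sub_dvd_pow_sub_pow (X i * X j : MvPolynomial (Fin m) K) 1 q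
  exact dvd_sub (Dvd.dvd.mul_left h1 _) (Dvd.dvd.mul_left h2 _)



variable {K : Type*} [Field K] {n : ℕ}

/-- equivalence singling out variable `i`. -/
noncomputable def Ei (K : Type*) [Field K] (n : ℕ) (i : Fin (n+1)) :
    MvPolynomial (Fin (n+1)) K ≃ₐ[K] Polynomial (MvPolynomial (Fin n) K) :=
  (renameEquiv K (Equiv.swap i 0)).trans (finSuccEquiv K n)

lemma Ei_X_self (i : Fin (n+1)) : Ei K n i (X i) = Polynomial.X := by
  simp [Ei, renameEquiv_apply, rename_X, Equiv.swap_apply_left, finSuccEquiv_X_zero]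

lemma swap_ne_zero {i j : Fin (n+1)} (h : j ≠ i) : Equiv.swap i 0 j ≠ 0 := by
  intro hc
  have := (Equiv.swap i 0).injective (hc.trans (Equiv.swap_apply_left i 0).symm)
  exact h this

/-- index of the other variables -/
noncomputable def vix (i j : Fin (n+1)) (h : j ≠ i) : Fin n :=
  (Equiv.swap i 0 j).pred (swap_ne_zero h)

lemma Ei_X_ne {i j : Fin (n+1)} (h : j ≠ i) :
    Ei K n i (X j) = Polynomial.C (X (vix i j h)) := by
  have : Equiv.swap i 0 j = (vix i j h).succ := by

    simp [vix, Fin.succ_pred]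
  simp [Ei, renameEquiv_apply, rename_X, this, finSuccEquiv_X_succ]

lemma vix_inj {i j k : Fin (n+1)} (hj : j ≠ i) (hk : k ≠ i) (hjk : j ≠ k) :
    vix i j hj ≠ vix i k hk := by
  intro hc
  apply hjk
  have : Equiv.swap i 0 j = Equiv.swap i 0 k := by
    have := congrArg Fin.succ hc
    simpa [vix, Fin.succ_pred] using this
  exact (Equiv.swap i 0).injective this

lemma prime_equiv_transfer {R S : Type*} [CommRing R] [CommRing S] (e : R ≃+* S) {p : R}
    (h : Prime (e p)) : Prime p := (MulEquiv.prime_iff e.toMulEquiv).mp h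

lemma primeXsubC (i : Fin (n+1)) (ε : K) :
    Prime (X i - C ε : MvPolynomial (Fin (n+1)) K) := by
  apply prime_equiv_transfer (Ei K n i).toRingEquiv
  have : (Ei K n i) (X i - C ε) = Polynomial.X - Polynomial.C (C ε) := by
    rw [map_sub, Ei_X_self]
    congr 1
    have : (C ε : MvPolynomial (Fin (n+1)) K) = algebraMap K _ ε := rfl
    rw [this, AlgEquiv.commutes]
    rfl
  rw [show (Ei K n i).toRingEquiv (X i - C ε) = (Ei K n i) (X i - C ε) from rfl, this]
  exact Polynomial.prime_X_sub_C _

lemma primeXsubX {i j : Fin (n+1)} (h : j ≠ i) :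
    Prime (X i - X j : MvPolynomial (Fin (n+1)) K) := by
  apply prime_equiv_transfer (Ei K n i).toRingEquiv
  have heq : (Ei K n i) (X i - X j) = Polynomial.X - Polynomial.C (X (vix i j h)) := by
    rw [map_sub, Ei_X_self, Ei_X_ne h]
  rw [show (Ei K n i).toRingEquiv (X i - X j) = (Ei K n i) (X i - X j) from rfl, heq]
  exact Polynomial.prime_X_sub_C _

lemma primeCXsub1 {S : Type*} [CommRing S] [IsDomain S] {r : S} (hr : r ≠ 0) :
    Prime (Polynomial.C r * Polynomial.X - 1) := by
  have hne : (Polynomial.C r * Polynomial.X - 1 : Polynomial S) ≠ 0 := by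
    intro hc
    have : (Polynomial.C r * Polynomial.X - 1 : Polynomial S).coeff 0 = 0 := by rw [hc]; simp
    simp [Polynomial.coeff_sub, Polynomial.coeff_one] at this
  have hdom : IsDomain (AdjoinRoot (Polynomial.C r * Polynomial.X - 1)) := by
    have : IsDomain (Localization.Away r) :=
      IsLocalization.isDomain_localization (powers_le_nonZeroDivisors_of_noZeroDivisors hr)
    exact MulEquiv.isDomain (Localization.Away r) (Localization.awayEquivAdjoin r).symm.toRingEquiv.toMulEquiv
  have hprime : (Ideal.span {Polynomial.C r * Polynomial.X - 1} :
      Ideal (Polynomial S)).IsPrime := by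
    rw [← Ideal.Quotient.isDomain_iff_prime]
    exact hdom
  exact (Ideal.span_singleton_prime hne).mp hprime

lemma primeXmulX {i j : Fin (n+1)} (hij : i ≠ j) :
    Prime (X i * X j - 1 : MvPolynomial (Fin (n+1)) K) := by
  apply prime_equiv_transfer (Ei K n i).toRingEquiv
  have heq : (Ei K n i) (X i * X j - 1) =
      Polynomial.C (X (vix i j hij.symm)) * Polynomial.X - 1 := by
    rw [map_sub, map_mul, Ei_X_self, Ei_X_ne hij.symm, map_one, mul_comm]
  rw [show (Ei K n i).toRingEquiv (X i * X j - 1) = (Ei K n i) (X i * X j - 1) from rfl, heq]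
  exact primeCXsub1 (X_ne_zero _)

/-- non-divisibility via evaluation -/
lemma notDvd_of_eval {m : ℕ} {f g : MvPolynomial (Fin m) K} (x : Fin m → K)
    (hf : eval x f = 0) (hg : eval x g ≠ 0) : ¬ f ∣ g := by
  rintro ⟨s, rfl⟩
  rw [map_mul, hf, zero_mul] at hg
  exact hg rfl

lemma not_dvd_of_irred {R : Type*} [CommMonoid R] {p q : R} (hq : Irreducible q)
    (hp : ¬ IsUnit p) (h : ¬ q ∣ p) : ¬ p ∣ q := by
  rintro ⟨s, rfl⟩
  rcases hq.isUnit_or_isUnit rfl with h1 | h2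
  · exact hp h1
  · obtain ⟨u, hu⟩ := h2
    exact h ⟨↑u⁻¹, by rw [← hu]; rw [mul_assoc]; simp⟩



section NonDvd
variable {m : ℕ}

lemma ndP1P1 {p q : Fin m × Fin m} (hp : p.1 < p.2) (hq : q.1 < q.2) (hpq : p ≠ q) :
    ¬ (X p.1 - X p.2 : MvPolynomial (Fin m) K) ∣ (X q.1 - X q.2) := by
  classical
  have hne : ¬((p.1 : ℕ) = q.1 ∧ (p.2 : ℕ) = q.2) := by
    rintro ⟨h1, h2⟩
    exact hpq (Prod.ext (Fin.val_injective h1) (Fin.val_injective h2))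
  have hp' : (p.1 : ℕ) < p.2 := hp
  have hq' : (q.1 : ℕ) < q.2 := hq
  have hc : ((q.1 : ℕ) ≠ p.1 ∧ (q.1 : ℕ) ≠ p.2) ∨ ((q.2 : ℕ) ≠ p.1 ∧ (q.2 : ℕ) ≠ p.2) := by
    omega
  rcases hc with ⟨h1, h2⟩ | ⟨h1, h2⟩
  · apply notDvd_of_eval (x := fun s => if (s : ℕ) = (q.1 : ℕ) then 1 else 0) <;>
    · simp only [map_sub, eval_X]
      split_ifs <;> first | (exfalso; omega) | (simp; done) | (exfalso; simp_all)
  · apply notDvd_of_eval (x := fun s => if (s : ℕ) = (q.2 : ℕ) then 1 else 0) <;>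
    · simp only [map_sub, eval_X]
      split_ifs <;> first | (exfalso; omega) | (simp; done) | (exfalso; simp_all)

lemma ndP1P2 (a b c d : Fin m) :
    ¬ (X a - X b : MvPolynomial (Fin m) K) ∣ (X c * X d - 1) := by
  apply notDvd_of_eval (x := fun _ => 0) <;> simp

lemma ndP2P2 {p q : Fin m × Fin m} (hp : p.1 < p.2) (hq : q.1 < q.2) (hpq : p ≠ q) :
    ¬ (X p.1 * X p.2 - 1 : MvPolynomial (Fin m) K) ∣ (X q.1 * X q.2 - 1) := by
  classical
  have hne : ¬((p.1 : ℕ) = q.1 ∧ (p.2 : ℕ) = q.2) := by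
    rintro ⟨h1, h2⟩
    exact hpq (Prod.ext (Fin.val_injective h1) (Fin.val_injective h2))
  have hp' : (p.1 : ℕ) < p.2 := hp
  have hq' : (q.1 : ℕ) < q.2 := hq
  have hc : ((q.1 : ℕ) ≠ p.1 ∧ (q.1 : ℕ) ≠ p.2) ∨ ((q.2 : ℕ) ≠ p.1 ∧ (q.2 : ℕ) ≠ p.2) := by
    omega
  apply notDvd_of_eval
    (x := fun s => if (s : ℕ) = (p.1 : ℕ) then 1 else if (s : ℕ) = (p.2 : ℕ) then 1 else 0) <;>
  · simp only [map_sub, map_mul, map_one, eval_X]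
    split_ifs <;> first | (exfalso; omega) | (simp; done) | (exfalso; simp_all)

lemma ndCeP1 (i : Fin m) {ε : K} (hε : ε ≠ 0) {k l : Fin m} (hkl : k ≠ l) :
    ¬ (X i - C ε : MvPolynomial (Fin m) K) ∣ (X k - X l) := by
  classical
  have hkl' : (k : ℕ) ≠ (l : ℕ) := fun hc => hkl (Fin.val_injective hc)
  by_cases hil : (i : ℕ) = (l : ℕ)
  · apply notDvd_of_eval (x := fun s => if (s : ℕ) = (i : ℕ) then ε else 0) <;>
    · simp only [map_sub, eval_X, eval_C]
      split_ifs <;>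
        first | (exfalso; omega) | (simp [hε]; done) | (simp; done) | (exfalso; simp_all)
  · apply notDvd_of_eval
      (x := fun s => if (s : ℕ) = (i : ℕ) then ε else if (s : ℕ) = (k : ℕ) then 1 else 0) <;>
    · simp only [map_sub, eval_X, eval_C]
      split_ifs <;>
        first | (exfalso; omega) | (simp [hε]; done) | (simp; done) | (exfalso; simp_all)

lemma ndCeP2 (i : Fin m) (ε : K) {k l : Fin m} (hkl : k ≠ l) :
    ¬ (X i - C ε : MvPolynomial (Fin m) K) ∣ (X k * X l - 1) := by
  classical
  have hkl' : (k : ℕ) ≠ (l : ℕ) := fun hc => hkl (Fin.val_injective hc)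
  apply notDvd_of_eval (x := fun s => if (s : ℕ) = (i : ℕ) then ε else 0) <;>
  · simp only [map_sub, map_mul, map_one, eval_X, eval_C]
    split_ifs <;> first | (exfalso; omega) | (simp; done) | (exfalso; simp_all)

end NonDvd

section Peel
variable (K) [Field K] {n : ℕ}

/-- the set of ordered pairs `i < j`. -/
def Ppairs (m : ℕ) : Finset (Fin m × Fin m) := Finset.univ.filter (fun p => p.1 < p.2)

/-- the symplectic Weyl-denominator-shaped product. -/
noncomputable def cpoly (m : ℕ) (K : Type*) [Field K] : MvPolynomial (Fin m) K :=
  (∏ i, (X i ^ 2 - 1)) * ∏ p ∈ Ppairs m, ((X p.1 - X p.2) * (X p.1 * X p.2 - 1))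

lemma mem_Ppairs {m : ℕ} {p : Fin m × Fin m} : p ∈ Ppairs m ↔ p.1 < p.2 := by
  simp [Ppairs]

lemma prodPairsDvd (N : ℕ) (lam : Fin (n+1) → ℕ) (hNE : ∀ j, sEE (n+1) lam j ≤ N) :
    (∏ p ∈ Ppairs (n+1), ((X p.1 - X p.2) * (X p.1 * X p.2 - 1)))
      ∣ sdet (n+1) N lam K := by
  classical
  suffices h : ∀ S : Finset (Fin (n+1) × Fin (n+1)), S ⊆ Ppairs (n+1) →
      (∏ p ∈ S, ((X p.1 - X p.2) * (X p.1 * X p.2 - 1))) ∣ sdet (n+1) N lam K by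
    exact h _ (le_refl _)
  intro S
  induction S using Finset.induction_on with
  | empty => intro _; simpa using one_dvd _
  | @insert p S hpS IH =>
    intro hsub
    have hsub' : S ⊆ Ppairs (n+1) := (Finset.subset_insert p S).trans hsub
    have hplt : p.1 < p.2 := mem_Ppairs.mp (hsub (Finset.mem_insert_self p S))
    have hP1 : Prime (X p.1 - X p.2 : MvPolynomial (Fin (n+1)) K) :=
      primeXsubX (Fin.ne_of_gt hplt)
    have hP2 : Prime (X p.1 * X p.2 - 1 : MvPolynomial (Fin (n+1)) K) :=
      primeXmulX (Fin.ne_of_lt hplt)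
    obtain ⟨u, hu⟩ := IH hsub'
    -- P1 does not divide the product over S
    have hP1S : ¬ (X p.1 - X p.2 : MvPolynomial (Fin (n+1)) K)
        ∣ ∏ q ∈ S, ((X q.1 - X q.2) * (X q.1 * X q.2 - 1)) := by
      intro hdvd
      obtain ⟨q, hqS, hq⟩ := (Prime.dvd_finset_prod_iff hP1 _).mp hdvd
      have hqlt : q.1 < q.2 := mem_Ppairs.mp (hsub' hqS)
      have hqp : p ≠ q := fun hc => hpS (hc ▸ hqS)
      rcases (hP1.dvd_mul).mp hq with h | h
      · exact ndP1P1 hplt hqlt hqp h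
      · exact ndP1P2 p.1 p.2 q.1 q.2 h
    have hP1u : (X p.1 - X p.2 : MvPolynomial (Fin (n+1)) K) ∣ u := by
      have := p1Dvd (K := K) (n+1) N lam (Fin.ne_of_lt hplt)
      rw [hu] at this
      exact (hP1.dvd_mul.mp this).resolve_left hP1S
    obtain ⟨u', hu'⟩ := hP1u
    -- P2 does not divide (prod over S) * P1
    have hP2S : ¬ (X p.1 * X p.2 - 1 : MvPolynomial (Fin (n+1)) K)
        ∣ (∏ q ∈ S, ((X q.1 - X q.2) * (X q.1 * X q.2 - 1))) * (X p.1 - X p.2) := by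
      intro hdvd
      rcases hP2.dvd_mul.mp hdvd with h | h
      · obtain ⟨q, hqS, hq⟩ := (Prime.dvd_finset_prod_iff hP2 _).mp h
        have hqlt : q.1 < q.2 := mem_Ppairs.mp (hsub' hqS)
        have hqp : p ≠ q := fun hc => hpS (hc ▸ hqS)
        rcases (hP2.dvd_mul).mp hq with h' | h'
        · exact not_dvd_of_irred (primeXsubX (Fin.ne_of_gt hqlt)).irreducible
            hP2.not_unit (ndP1P2 q.1 q.2 p.1 p.2) h'
        · exact ndP2P2 hplt hqlt hqp h'
      · exact not_dvd_of_irred (primeXsubX (Fin.ne_of_gt hplt)).irreducible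
          hP2.not_unit (ndP1P2 p.1 p.2 p.1 p.2) h
    have hP2u : (X p.1 * X p.2 - 1 : MvPolynomial (Fin (n+1)) K) ∣ u' := by
      have := p2Dvd (K := K) (n+1) N lam hNE (Fin.ne_of_lt hplt)
      rw [hu, hu', ← mul_assoc] at this
      exact (hP2.dvd_mul.mp this).resolve_left hP2S
    obtain ⟨u'', hu''⟩ := hP2u
    refine ⟨u'', ?_⟩
    rw [Finset.prod_insert hpS, hu, hu', hu'']
    ring

lemma QfacEq (m : ℕ) (k : Fin m) :
    (X k ^ 2 - 1 : MvPolynomial (Fin m) K) = (X k - C 1) * (X k - C (-1)) := by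
  have h1 : (C (1:K) : MvPolynomial (Fin m) K) = 1 := by simp
  have h2 : (C (-1:K) : MvPolynomial (Fin m) K) = -1 := by simp
  rw [h1, h2]; ring

lemma keyDvd (N : ℕ) (lam : Fin (n+1) → ℕ) (hNE : ∀ j, sEE (n+1) lam j ≤ N) :
    cpoly (n+1) K ∣ sdet (n+1) N lam K := by
  classical
  have hQ := rowsDvd (K := K) (n+1) N lam hNE
  have hD := prodPairsDvd K N lam hNE
  set DP : MvPolynomial (Fin (n+1)) K :=
    ∏ p ∈ Ppairs (n+1), ((X p.1 - X p.2) * (X p.1 * X p.2 - 1)) with hDP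
  have hQne : ∀ k : Fin (n+1), (X k ^ 2 - 1 : MvPolynomial (Fin (n+1)) K) ≠ 0 := by
    intro k
    rw [QfacEq]
    exact mul_ne_zero (primeXsubC k 1).ne_zero (primeXsubC k (-1)).ne_zero
  have hq1ndDP : ∀ (k : Fin (n+1)) (ε : K), ε ≠ 0 →
      ¬ (X k - C ε : MvPolynomial (Fin (n+1)) K) ∣ DP := by
    intro k ε hε hdvd
    rw [hDP] at hdvd
    obtain ⟨q, hqS, hq⟩ := (Prime.dvd_finset_prod_iff (primeXsubC k ε) _).mp hdvd
    have hqlt : q.1 < q.2 := mem_Ppairs.mp hqS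
    rcases ((primeXsubC k ε).dvd_mul).mp hq with h | h
    · exact ndCeP1 k hε (Fin.ne_of_lt hqlt) h
    · exact ndCeP2 k ε (Fin.ne_of_lt hqlt) h
  suffices h : ∀ T : Finset (Fin (n+1)),
      ((∏ i ∈ T, (X i ^ 2 - 1)) * DP) ∣ sdet (n+1) N lam K by
    exact h Finset.univ
  intro T
  induction T using Finset.induction_on with
  | empty => simpa using hD
  | @insert i T hiT IH =>
    obtain ⟨w, hw⟩ := IH
    have hQT : (∏ k ∈ insert i T, (X k ^ 2 - 1)) ∣ sdet (n+1) N lam K :=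
      (Finset.prod_dvd_prod_of_subset _ _ _ (Finset.subset_univ _)).trans hQ
    obtain ⟨u, hu⟩ := hQT
    rw [Finset.prod_insert hiT] at hu
    have hTne : (∏ k ∈ T, (X k ^ 2 - 1) : MvPolynomial (Fin (n+1)) K) ≠ 0 :=
      Finset.prod_ne_zero_iff.mpr (fun k _ => hQne k)
    -- cancel the common factor ∏_T
    have hcan : DP * w = (X i ^ 2 - 1) * u := by
      apply mul_left_cancel₀ hTne
      rw [← mul_assoc, ← hw, hu]; ring
    have hq1 : Prime (X i - C (1:K) : MvPolynomial (Fin (n+1)) K) := primeXsubC i 1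
    have hq2 : Prime (X i - C (-1:K) : MvPolynomial (Fin (n+1)) K) := primeXsubC i (-1)
    have h1w : (X i - C (1:K) : MvPolynomial (Fin (n+1)) K) ∣ w := by
      have : (X i - C (1:K) : MvPolynomial (Fin (n+1)) K) ∣ DP * w := by
        rw [hcan, QfacEq]
        exact Dvd.dvd.mul_right (Dvd.dvd.mul_right (dvd_refl _) _) u
      exact (hq1.dvd_mul.mp this).resolve_left (hq1ndDP i 1 one_ne_zero)
    obtain ⟨w1, hw1⟩ := h1w
    have h2w1 : (X i - C (-1:K) : MvPolynomial (Fin (n+1)) K) ∣ w1 := by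
      have hc : (X i - C (1:K)) * (DP * w1) = (X i - C (1:K)) * ((X i - C (-1:K)) * u) := by
        rw [show (X i - C (1:K)) * (DP * w1) = DP * ((X i - C (1:K)) * w1) by ring, ← hw1,
          hcan, QfacEq]
        ring
      have := mul_left_cancel₀ hq1.ne_zero hc
      have : (X i - C (-1:K) : MvPolynomial (Fin (n+1)) K) ∣ DP * w1 := ⟨u, this⟩
      exact (hq2.dvd_mul.mp this).resolve_left (hq1ndDP i (-1) (by norm_num))
    obtain ⟨w2, hw2⟩ := h2w1
    refine ⟨w2, ?_⟩
    rw [hw, hw1, hw2, Finset.prod_insert hiT, QfacEq]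
    ring

end Peel

section EvalSpec
variable {K : Type*} [Field K]

lemma eval_sdet (m N : ℕ) (lam : Fin m → ℕ) (hNE : ∀ j, sEE m lam j ≤ N)
    (x : Fin m → K) (hx : ∀ i, x i ≠ 0) :
    eval x (sdet m N lam K) = (∏ i, x i) ^ N * (spEvenMat m lam x).det := by
  classical
  rw [sdet, RingHom.map_det]
  have hmat : (eval x).mapMatrix (sA m N lam K)
      = Matrix.of (fun i j => x i ^ N * spEvenMat m lam x i j) := by
    ext i j
    have hz : ((sEE m lam j : ℤ)) = (lam j : ℤ) + (m : ℤ) - (j : ℤ) := by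
      have := j.isLt; unfold sEE; omega
    have he1 : (x i : K) ^ ((lam j : ℤ) + m - (j:ℕ)) = x i ^ (sEE m lam j) := by
      rw [← hz, zpow_natCast]
    have he2 : (x i : K) ^ (-((lam j : ℤ) + m - (j:ℕ))) = (x i ^ (sEE m lam j))⁻¹ := by
      rw [← hz, zpow_neg, zpow_natCast]
    simp only [RingHom.mapMatrix_apply, Matrix.map_apply, sA, Matrix.of_apply, map_sub, map_pow,
      eval_X, spEvenMat, he1, he2]
    rw [mul_sub, ← pow_add]
    congr 1
    exact pow_sub₀ (x i) (hx i) (hNE j)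
  rw [hmat, Matrix.det_mul_column, Finset.prod_pow]

/-- Substitution of `0` for the first variable. -/
noncomputable def sPhi (K : Type*) [Field K] (n : ℕ) :
    MvPolynomial (Fin (n+1)) K →+* MvPolynomial (Fin n) K :=
  (aeval (Fin.cases 0 X : Fin (n+1) → MvPolynomial (Fin n) K)).toRingHom

lemma sPhi_X_zero {n : ℕ} : sPhi K n (X 0) = 0 := by
  simp [sPhi]

lemma sPhi_X_succ {n : ℕ} (i : Fin n) : sPhi K n (X i.succ) = X i := by
  simp [sPhi]

lemma sPhi_sdet (n N N' d : ℕ) (lam : Fin (n+1) → ℕ) (lam' : Fin n → ℕ)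
    (hN0 : N = sEE (n+1) lam 0)
    (hlt : ∀ j : Fin (n+1), j ≠ 0 → sEE (n+1) lam j < N)
    (hE : ∀ j : Fin n, sEE (n+1) lam j.succ = sEE n lam' j)
    (hNE' : ∀ j, sEE n lam' j ≤ N')
    (hdd : N = N' + d) :
    sPhi K n (sdet (n+1) N lam K) = -((∏ i, X i) ^ d * sdet n N' lam' K) := by
  classical
  rw [sdet, RingHom.map_det]
  set M := (sPhi K n).mapMatrix (sA (n+1) N lam K) with hM
  have hEpos : ∀ j : Fin (n+1), 0 < sEE (n+1) lam j := by
    intro j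
    have := j.isLt
    unfold sEE; omega
  have hrow : ∀ j, M 0 j = if j = 0 then -1 else 0 := by
    intro j
    have : M 0 j = (0:MvPolynomial (Fin n) K) ^ (N + sEE (n+1) lam j)
        - (0:MvPolynomial (Fin n) K) ^ (N - sEE (n+1) lam j) := by
      simp [hM, RingHom.mapMatrix_apply, Matrix.map_apply, sA, Matrix.of_apply, map_sub,
        map_pow, sPhi_X_zero]
    rw [this, zero_pow (by have := hEpos j; omega)]
    by_cases hj : j = 0
    · subst hj
      rw [if_pos rfl, show N - sEE (n+1) lam 0 = 0 by omega, pow_zero]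
      ring
    · rw [if_neg hj, zero_pow (by have := hlt j hj; omega)]
      ring
  rw [Matrix.det_succ_row_zero]
  rw [Finset.sum_eq_single 0]
  · have hminor : (M.submatrix Fin.succ (Fin.succAbove 0))
        = Matrix.of (fun i j => (X i : MvPolynomial (Fin n) K) ^ d * sA n N' lam' K i j) := by
      ext i j
      have h1 : N + sEE (n+1) lam j.succ = d + (N' + sEE n lam' j) := by
        have := hE j; have := hNE' j; omega
      have h2 : N - sEE (n+1) lam j.succ = d + (N' - sEE n lam' j) := by
        have := hE j; have := hNE' j; omega
      simp only [Matrix.submatrix_apply, Fin.succAbove_zero, hM, RingHom.mapMatrix_apply,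
        Matrix.map_apply, sA, Matrix.of_apply, map_sub, map_pow, sPhi_X_succ]
      rw [h1, h2, pow_add, pow_add]
      ring
    rw [hrow 0, hminor, Matrix.det_mul_column, Finset.prod_pow]
    simp only [Fin.val_zero, pow_zero, one_mul, sdet, if_true]
    ring
  · intro j _ hj
    rw [hrow j, if_neg hj]
    ring
  · intro h
    exact absurd (Finset.mem_univ 0) h

lemma bpoly_ne (m : ℕ) : sdet m m (fun _ => 0) K ≠ 0 := by
  induction m with
  | zero =>
    rw [sdet, Matrix.det_fin_zero]
    exact one_ne_zero
  | succ n IH =>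
    intro hc
    have h0 : sPhi K n (sdet (n+1) (n+1) (fun _ => 0) K)
        = -((∏ i, X i) ^ 1 * sdet n n (fun _ => 0) K) := by
      apply sPhi_sdet
      · simp [sEE]
      · intro j hj
        have hj' : 0 < (j : ℕ) := Fin.pos_of_ne_zero hj
        have := j.isLt
        simp only [sEE]
        omega
      · intro j
        have := j.isLt
        simp only [sEE, Fin.val_succ]
        omega
      · intro j; simp [sEE]
      · omega
    rw [hc, map_zero] at h0
    have hprod : (∏ i : Fin n, (X i : MvPolynomial (Fin n) K)) ≠ 0 :=
      Finset.prod_ne_zero_iff.mpr (fun i _ => X_ne_zero i)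
    have : ((∏ i : Fin n, (X i : MvPolynomial (Fin n) K)) ^ 1 * sdet n n (fun _ => 0) K) ≠ 0 := by
      apply mul_ne_zero _ IH
      simpa using hprod
    exact this (neg_eq_zero.mp h0.symm)

end EvalSpec

section Degree
variable {K : Type*} [Field K] {n : ℕ}

lemma Ei_ringHom_apply (i : Fin (n+1)) (f : MvPolynomial (Fin (n+1)) K) :
    (Ei K n i).toRingEquiv.toRingHom f = Ei K n i f := rfl

lemma degreeOf_eq_EiDeg (i : Fin (n+1)) (f : MvPolynomial (Fin (n+1)) K) :
    degreeOf i f = (Ei K n i f).natDegree := by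
  have h1 : Ei K n i f = finSuccEquiv K n (rename (Equiv.swap i 0) f) := rfl
  rw [h1, natDegree_finSuccEquiv]
  have := degreeOf_rename_of_injective (p := f) (Equiv.swap i 0).injective i
  rw [Equiv.swap_apply_left] at this
  exact this.symm

lemma natDegEiSdet (N B : ℕ) (lam : Fin (n+1) → ℕ) (i : Fin (n+1))
    (hB : ∀ j, N + sEE (n+1) lam j ≤ B) :
    (Ei K n i (sdet (n+1) N lam K)).natDegree ≤ B := by
  classical
  rw [sdet, ← Ei_ringHom_apply, RingHom.map_det, Matrix.det_apply]
  apply Polynomial.natDegree_sum_le_of_forall_le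
  intro σ _
  have hsmul : (Equiv.Perm.sign σ : ℤˣ) • (∏ k, (Ei K n i).toRingEquiv.toRingHom.mapMatrix
        (sA (n+1) N lam K) (σ k) k)
      = ((Equiv.Perm.sign σ : ℤ) : Polynomial (MvPolynomial (Fin n) K)) *
        (∏ k, (Ei K n i).toRingEquiv.toRingHom.mapMatrix (sA (n+1) N lam K) (σ k) k) := by
    rw [Units.smul_def, zsmul_eq_mul]
  rw [hsmul]
  refine le_trans (Polynomial.natDegree_mul_le) ?_
  rw [Polynomial.natDegree_intCast, zero_add]
  refine le_trans (Polynomial.natDegree_prod_le _ _) ?_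
  have hent : ∀ k : Fin (n+1),
      ((Ei K n i).toRingEquiv.toRingHom.mapMatrix (sA (n+1) N lam K) (σ k) k).natDegree
        ≤ if k = σ.symm i then B else 0 := by
    intro k
    have hentry : (Ei K n i).toRingEquiv.toRingHom.mapMatrix (sA (n+1) N lam K) (σ k) k
        = (Ei K n i (X (σ k))) ^ (N + sEE (n+1) lam k)
          - (Ei K n i (X (σ k))) ^ (N - sEE (n+1) lam k) := by
      simp [RingHom.mapMatrix_apply, Matrix.map_apply, sA, Matrix.of_apply, Ei_ringHom_apply,
        map_sub, map_pow]
    rw [hentry]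
    by_cases hk : σ k = i
    · have hk' : k = σ.symm i := by rw [← hk]; simp
      rw [if_pos hk', hk, Ei_X_self]
      refine le_trans (Polynomial.natDegree_sub_le _ _) ?_
      simp only [Polynomial.natDegree_X_pow]
      have := hB k
      omega
    · have hk' : ¬ k = σ.symm i := by
        intro hc; apply hk; rw [hc]; simp
      rw [if_neg hk', Ei_X_ne hk]
      refine le_trans (Polynomial.natDegree_sub_le _ _) ?_
      rw [← Polynomial.C_pow, ← Polynomial.C_pow]
      simp [Polynomial.natDegree_C]
  refine le_trans (Finset.sum_le_sum (fun k _ => hent k)) ?_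
  rw [Finset.sum_ite_eq' Finset.univ (σ.symm i) (fun _ => B)]
  simp

lemma EiQdeg (i : Fin (n+1)) :
    (Ei K n i (∏ k, (X k ^ 2 - 1) : MvPolynomial (Fin (n+1)) K)).natDegree = 2 := by
  classical
  rw [map_prod]
  have hfac : ∀ k : Fin (n+1),
      (Ei K n i (X k ^ 2 - 1)).natDegree = if k = i then 2 else 0 := by
    intro k
    by_cases hk : k = i
    · subst hk
      rw [if_pos rfl, map_sub, map_pow, Ei_X_self, map_one, ← Polynomial.C_1,
        Polynomial.natDegree_X_pow_sub_C]
    · rw [if_neg hk, map_sub, map_pow, Ei_X_ne hk, map_one, ← Polynomial.C_pow, ← Polynomial.C_1,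
        ← Polynomial.C_sub, Polynomial.natDegree_C]
  have hne : ∀ k ∈ Finset.univ, Ei K n i ((X k ^ 2 - 1) : MvPolynomial (Fin (n+1)) K) ≠ 0 := by
    intro k _ hc
    have : ((X k ^ 2 - 1) : MvPolynomial (Fin (n+1)) K) = 0 := by
      apply (Ei K n i).injective
      rw [hc, map_zero]
    exact (mul_ne_zero (primeXsubC (K := K) k 1).ne_zero
      (primeXsubC (K := K) k (-1)).ne_zero) (by rw [← QfacEq]; exact this)
  rw [Polynomial.natDegree_prod _ _ hne]
  rw [Finset.sum_congr rfl (fun k _ => hfac k), Finset.sum_ite_eq' Finset.univ i (fun _ => 2)]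
  simp

lemma EiPairdeg (i : Fin (n+1)) {p : Fin (n+1) × Fin (n+1)} (hp : p.1 < p.2) :
    (Ei K n i ((X p.1 - X p.2) * (X p.1 * X p.2 - 1) : MvPolynomial (Fin (n+1)) K)).natDegree
      = if p.1 = i ∨ p.2 = i then 2 else 0 := by
  classical
  have hne12 : p.1 ≠ p.2 := Fin.ne_of_lt hp
  have hP1ne : ((X p.1 - X p.2) : MvPolynomial (Fin (n+1)) K) ≠ 0 :=
    (primeXsubX hne12.symm).ne_zero
  have hP2ne : ((X p.1 * X p.2 - 1) : MvPolynomial (Fin (n+1)) K) ≠ 0 :=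
    (primeXmulX hne12).ne_zero
  rw [map_mul, Polynomial.natDegree_mul ((map_ne_zero_iff _ (Ei K n i).injective).mpr hP1ne)
    ((map_ne_zero_iff _ (Ei K n i).injective).mpr hP2ne)]
  rcases Decidable.em (p.1 = i) with h1 | h1
  · subst h1
    have h2 : p.2 ≠ p.1 := hne12.symm
    rw [if_pos (Or.inl rfl)]
    have e1 : (Ei K n p.1 (X p.1 - X p.2)).natDegree = 1 := by
      rw [map_sub, Ei_X_self, Ei_X_ne h2, Polynomial.natDegree_X_sub_C]
    have e2 : (Ei K n p.1 (X p.1 * X p.2 - 1)).natDegree = 1 := by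
      rw [map_sub, map_mul, Ei_X_self, Ei_X_ne h2, map_one]
      have : (Polynomial.X * Polynomial.C (X (vix p.1 p.2 h2)) - 1 :
          Polynomial (MvPolynomial (Fin n) K))
          = Polynomial.C (X (vix p.1 p.2 h2)) * Polynomial.X + Polynomial.C (-1) := by
        rw [Polynomial.C_neg, Polynomial.C_1]; ring
      rw [this, Polynomial.natDegree_linear (X_ne_zero _)]
    omega
  · rcases Decidable.em (p.2 = i) with h2 | h2
    · subst h2
      have h1' : p.1 ≠ p.2 := hne12
      rw [if_pos (Or.inr rfl)]
      have e1 : (Ei K n p.2 (X p.1 - X p.2)).natDegree = 1 := by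
        rw [map_sub, Ei_X_self, Ei_X_ne h1']
        rw [show (Polynomial.C (X (vix p.2 p.1 h1')) - Polynomial.X :
            Polynomial (MvPolynomial (Fin n) K))
            = -(Polynomial.X - Polynomial.C (X (vix p.2 p.1 h1'))) by ring,
          Polynomial.natDegree_neg, Polynomial.natDegree_X_sub_C]
      have e2 : (Ei K n p.2 (X p.1 * X p.2 - 1)).natDegree = 1 := by
        rw [map_sub, map_mul, Ei_X_self, Ei_X_ne h1', map_one]
        have : (Polynomial.C (X (vix p.2 p.1 h1')) * Polynomial.X - 1 :
            Polynomial (MvPolynomial (Fin n) K))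
            = Polynomial.C (X (vix p.2 p.1 h1')) * Polynomial.X + Polynomial.C (-1) := by
          rw [Polynomial.C_neg, Polynomial.C_1]; ring
        rw [this, Polynomial.natDegree_linear (X_ne_zero _)]
      omega
    · rw [if_neg (by tauto)]
      have h1' : p.1 ≠ i := h1
      have h2' : p.2 ≠ i := h2
      have e1 : (Ei K n i (X p.1 - X p.2)).natDegree = 0 := by
        rw [map_sub, Ei_X_ne h1', Ei_X_ne h2', ← Polynomial.C_sub, Polynomial.natDegree_C]
      have e2 : (Ei K n i (X p.1 * X p.2 - 1)).natDegree = 0 := by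
        rw [map_sub, map_mul, Ei_X_ne h1', Ei_X_ne h2', map_one, ← Polynomial.C_mul,
          ← Polynomial.C_1, ← Polynomial.C_sub, Polynomial.natDegree_C]
      omega

lemma pairsFilterCard (i : Fin (n+1)) :
    ((Ppairs (n+1)).filter (fun p => p.1 = i ∨ p.2 = i)).card = n := by
  classical
  have hsplit : (Ppairs (n+1)).filter (fun p => p.1 = i ∨ p.2 = i)
      = ((Finset.Ioi i).image (fun l => (i, l))) ∪ ((Finset.Iio i).image (fun k => (k, i))) := by
    ext q
    simp only [Finset.mem_filter, mem_Ppairs, Finset.mem_union, Finset.mem_image,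
      Finset.mem_Ioi, Finset.mem_Iio]
    constructor
    · rintro ⟨hlt, h | h⟩
      · exact Or.inl ⟨q.2, h ▸ hlt, by rw [← h]⟩
      · exact Or.inr ⟨q.1, h ▸ hlt, by rw [← h]⟩
    · rintro (⟨l, hl, hq⟩ | ⟨k, hk, hq⟩)
      · rw [← hq]; exact ⟨hl, Or.inl rfl⟩
      · rw [← hq]; exact ⟨hk, Or.inr rfl⟩
  rw [hsplit, Finset.card_union_of_disjoint, Finset.card_image_of_injective,
    Finset.card_image_of_injective, Fin.card_Ioi, Fin.card_Iio]
  · have := i.isLt; omega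
  · exact fun a b hab => (Prod.ext_iff.mp hab).1
  · exact fun a b hab => (Prod.ext_iff.mp hab).2
  · rw [Finset.disjoint_left]
    intro q hq1 hq2
    simp only [Finset.mem_image, Finset.mem_Ioi, Finset.mem_Iio] at hq1 hq2
    obtain ⟨l, hl, hql⟩ := hq1
    obtain ⟨k, hk, hqk⟩ := hq2
    have h1 : i = k := by
      have := (Prod.ext_iff.mp (hql.trans hqk.symm)).1
      exact this
    rw [← h1] at hk
    exact absurd hk (lt_irrefl i)

lemma EiCdeg (i : Fin (n+1)) : (Ei K n i (cpoly (n+1) K)).natDegree = 2*(n+1) := by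
  classical
  rw [cpoly, map_mul]
  have hDP : (Ei K n i (∏ p ∈ Ppairs (n+1),
      ((X p.1 - X p.2) * (X p.1 * X p.2 - 1)) : MvPolynomial (Fin (n+1)) K)).natDegree = 2*n := by
    rw [map_prod]
    have hne : ∀ p ∈ Ppairs (n+1), Ei K n i ((X p.1 - X p.2) * (X p.1 * X p.2 - 1)
        : MvPolynomial (Fin (n+1)) K) ≠ 0 := by
      intro p hp
      have hlt := mem_Ppairs.mp hp
      apply (map_ne_zero_iff _ (Ei K n i).injective).mpr
      exact mul_ne_zero (primeXsubX (Fin.ne_of_gt hlt)).ne_zero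
        (primeXmulX (Fin.ne_of_lt hlt)).ne_zero
    rw [Polynomial.natDegree_prod _ _ hne]
    rw [Finset.sum_congr rfl (fun p hp => EiPairdeg i (mem_Ppairs.mp hp))]
    rw [Finset.sum_ite, Finset.sum_const, Finset.sum_const]
    simp only [smul_eq_mul, mul_zero, add_zero]
    rw [pairsFilterCard i]
    ring
  have hQne : (∏ k, (X k ^ 2 - 1) : MvPolynomial (Fin (n+1)) K) ≠ 0 := by
    apply Finset.prod_ne_zero_iff.mpr
    intro k _
    rw [QfacEq]
    exact mul_ne_zero (primeXsubC k 1).ne_zero (primeXsubC k (-1)).ne_zero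
  have hDPne : (∏ p ∈ Ppairs (n+1), ((X p.1 - X p.2) * (X p.1 * X p.2 - 1))
      : MvPolynomial (Fin (n+1)) K) ≠ 0 := by
    apply Finset.prod_ne_zero_iff.mpr
    intro p hp
    have hlt := mem_Ppairs.mp hp
    exact mul_ne_zero (primeXsubX (Fin.ne_of_gt hlt)).ne_zero
      (primeXmulX (Fin.ne_of_lt hlt)).ne_zero
  rw [Polynomial.natDegree_mul ((map_ne_zero_iff _ (Ei K n i).injective).mpr hQne)
    ((map_ne_zero_iff _ (Ei K n i).injective).mpr hDPne), EiQdeg, hDP]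
  ring

lemma eq_C_of_degreeOf_eq_zero {m : ℕ} {t : MvPolynomial (Fin m) K}
    (h : ∀ i, degreeOf i t = 0) : t = C (coeff 0 t) := by
  classical
  apply MvPolynomial.ext
  intro d
  rw [coeff_C]
  by_cases hd : 0 = d
  · rw [if_pos hd, ← hd]
  · rw [if_neg hd]
    by_contra hc
    have hdsupp : d ∈ t.support := by rwa [mem_support_iff]
    have : ∀ i, d i = 0 := by
      intro i
      have hle : d i ≤ degreeOf i t := by
        rw [degreeOf_eq_sup]
        exact Finset.le_sup (f := fun m => m i) hdsupp
      rw [h i] at hle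
      omega
    apply hd
    symm
    apply Finsupp.ext
    intro i
    simp [this i]

lemma bpoly_factor :
    ∃ γ : K, γ ≠ 0 ∧ sdet (n+1) (n+1) (fun _ => 0) K = cpoly (n+1) K * C γ := by
  classical
  obtain ⟨t, ht⟩ := keyDvd (K := K) (n := n) (n+1) (fun _ => 0)
    (by intro j; have := j.isLt; simp only [sEE]; omega)
  have hbne := bpoly_ne (K := K) (n+1)
  have htne : t ≠ 0 := by
    intro hc; rw [hc, mul_zero] at ht; exact hbne ht
  have hcne : cpoly (n+1) K ≠ 0 := by
    intro hc; rw [hc, zero_mul] at ht; exact hbne ht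
  have hdeg : ∀ i : Fin (n+1), degreeOf i t = 0 := by
    intro i
    have hb : (Ei K n i (sdet (n+1) (n+1) (fun _ => 0) K)).natDegree ≤ 2*(n+1) := by
      apply natDegEiSdet
      intro j
      have := j.isLt
      simp only [sEE]
      omega
    rw [ht, map_mul, Polynomial.natDegree_mul
      ((map_ne_zero_iff _ (Ei K n i).injective).mpr hcne)
      ((map_ne_zero_iff _ (Ei K n i).injective).mpr htne), EiCdeg] at hb
    rw [degreeOf_eq_EiDeg]
    omega
  refine ⟨coeff 0 t, ?_, ?_⟩
  · intro hc
    apply htne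
    rw [eq_C_of_degreeOf_eq_zero hdeg, hc, map_zero]
  · conv_lhs => rw [ht]
    congr 1
    exact eq_C_of_degreeOf_eq_zero hdeg

end Degree

lemma sPhiB_eq {K : Type*} [Field K] (n : ℕ) :
    sPhi K n (sdet (n+1) (n+1) (fun _ => 0) K)
      = -((∏ i, X i) ^ 1 * sdet n n (fun _ => 0) K) := by
  apply sPhi_sdet
  · simp [sEE]
  · intro j hj
    have hj' : 0 < (j : ℕ) := Fin.pos_of_ne_zero hj
    have := j.isLt
    simp only [sEE]
    omega
  · intro j
    have := j.isLt
    simp only [sEE, Fin.val_succ]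
    omega
  · intro j; have := j.isLt; simp only [sEE]; omega
  · omega

end Sp13

/-- `(x₁⋯x_{n+1})^r Sp_{2(n+1)}(λ; x)` is a polynomial in the `xᵢ`, and its
evaluation at `x₁ = 0` is `(x₂⋯x_{n+1})^r Sp_{2n}((λ₂,…,λ_{n+1}); x₂,…,x_{n+1})` if
`λ₁ = r`, and `0` if `λ₁ < r`. -/
theorem stmt13 (n r : ℕ) {K : Type*} [Field K]
    (lam : Fin (n+1) → ℕ) (hlam : Antitone lam) (hr : lam 0 ≤ r) :
    ∃ P : MvPolynomial (Fin (n+1)) K,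
      (∀ x : Fin (n+1) → K,
        (∀ i, x i ≠ 0) → Matrix.det (spEvenMat (n+1) (fun _ => 0) x) ≠ 0 →
        (∏ i, x i) ^ r * spEven (n+1) lam x = MvPolynomial.eval x P)
      ∧
      (∀ x : Fin (n+1) → K, x 0 = 0 → (∀ i, i ≠ 0 → x i ≠ 0) →
        Matrix.det (spEvenMat n (fun _ => 0) (fun i : Fin n => x i.succ)) ≠ 0 →
        MvPolynomial.eval x P =
          if lam 0 = r then
            (∏ i : Fin n, x i.succ) ^ r *
              spEven n (fun j => lam j.succ) (fun i : Fin n => x i.succ)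
          else 0) := by
  classical
  open MvPolynomial Sp13 in
  · have hNE : ∀ j, sEE (n+1) lam j ≤ lam 0 + (n+1) := by
      intro j
      have h1 := j.isLt
      have h2 := hlam (Fin.zero_le j)
      simp only [sEE]
      omega
    have hNE0 : ∀ j : Fin (n+1), sEE (n+1) (fun _ => 0) j ≤ n+1 := by
      intro j; have := j.isLt; simp only [sEE]; omega
    obtain ⟨γ, hγ, hbfac⟩ := bpoly_factor (K := K) (n := n)
    obtain ⟨q, hq⟩ := keyDvd (K := K) (n := n) (lam 0 + (n+1)) lam hNE
    refine ⟨C γ⁻¹ * ((∏ i, X i) ^ (r - lam 0) * q), ?_, ?_⟩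
    all_goals
      have hCC : (C γ⁻¹ * C γ : MvPolynomial (Fin (n+1)) K) = 1 := by
        rw [← C_mul, inv_mul_cancel₀ hγ, C_1]
      have hPb : (C γ⁻¹ * ((∏ i, X i) ^ (r - lam 0) * q))
            * sdet (n+1) (n+1) (fun _ => 0) K
          = (∏ i, X i) ^ (r - lam 0) * sdet (n+1) (lam 0 + (n+1)) lam K := by
        rw [hbfac, hq]
        calc C γ⁻¹ * ((∏ i, X i) ^ (r - lam 0) * q) * (cpoly (n+1) K * C γ)
            = (C γ⁻¹ * C γ) * ((∏ i, X i) ^ (r - lam 0) * (cpoly (n+1) K * q)) := by ring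
          _ = (∏ i, X i) ^ (r - lam 0) * (cpoly (n+1) K * q) := by rw [hCC, one_mul]
    -- part (i)
    · intro x hx hden
      have hprod : (∏ i, x i) ≠ 0 := Finset.prod_ne_zero_iff.mpr (fun i _ => hx i)
      have hevprod : eval x (∏ i : Fin (n+1), (X i : MvPolynomial (Fin (n+1)) K))
          = ∏ i, x i := by
        rw [map_prod]; simp
      have heval : eval x (C γ⁻¹ * ((∏ i, X i) ^ (r - lam 0) * q))
            * eval x (sdet (n+1) (n+1) (fun _ => 0) K)
          = (∏ i, x i) ^ (r - lam 0) * eval x (sdet (n+1) (lam 0 + (n+1)) lam K) := by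
        have h2 : eval x ((∏ i, X i) ^ (r - lam 0) * sdet (n+1) (lam 0 + (n+1)) lam K)
            = (∏ i, x i) ^ (r - lam 0) * eval x (sdet (n+1) (lam 0 + (n+1)) lam K) := by
          rw [map_mul, map_pow, hevprod]
        exact (map_mul (eval x) _ _).symm.trans ((congrArg (eval x) hPb).trans h2)
      rw [eval_sdet (n+1) (n+1) _ hNE0 x hx, eval_sdet (n+1) (lam 0 + (n+1)) lam hNE x hx]
        at heval
      have key : eval x (C γ⁻¹ * ((∏ i, X i) ^ (r - lam 0) * q))
            * (spEvenMat (n+1) (fun _ => 0) x).det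
          = (∏ i, x i) ^ r * (spEvenMat (n+1) lam x).det := by
        apply mul_left_cancel₀ (pow_ne_zero (n+1) hprod)
        calc (∏ i, x i) ^ (n+1) * (eval x (C γ⁻¹ * ((∏ i, X i) ^ (r - lam 0) * q))
              * (spEvenMat (n+1) (fun _ => 0) x).det)
            = eval x (C γ⁻¹ * ((∏ i, X i) ^ (r - lam 0) * q))
              * ((∏ i, x i) ^ (n+1) * (spEvenMat (n+1) (fun _ => 0) x).det) := by ring
          _ = (∏ i, x i) ^ (r - lam 0) * ((∏ i, x i) ^ (lam 0 + (n+1))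
              * (spEvenMat (n+1) lam x).det) := heval
          _ = (∏ i, x i) ^ (n+1) * ((∏ i, x i) ^ r * (spEvenMat (n+1) lam x).det) := by
              rw [← mul_assoc, ← mul_assoc, ← pow_add, ← pow_add]
              congr 2
              omega
      rw [spEven, ← mul_div_assoc, div_eq_iff hden]
      linear_combination -key
    -- part (ii)
    · intro x hx0 hxi hden'
      have hx'ne : ∀ i : Fin n, x i.succ ≠ 0 := fun i => hxi i.succ (Fin.succ_ne_zero i)
      have hprod' : (∏ i : Fin n, x i.succ) ≠ 0 :=
        Finset.prod_ne_zero_iff.mpr (fun i _ => hx'ne i)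
      -- commuting evaluation with the specialization
      have hcomm : ∀ f : MvPolynomial (Fin (n+1)) K,
          eval x f = eval (fun i : Fin n => x i.succ) (sPhi K n f) := by
        intro f
        have hhom : (eval x : MvPolynomial (Fin (n+1)) K →+* K)
            = (eval (fun i : Fin n => x i.succ)).comp (sPhi K n) := by
          apply MvPolynomial.ringHom_ext
          · intro c; simp [sPhi]
          · intro i
            refine Fin.cases ?_ ?_ i
            · simp only [RingHom.comp_apply, sPhi_X_zero, map_zero, eval_X]
              exact hx0
            · intro k
              simp only [RingHom.comp_apply, sPhi_X_succ, eval_X]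
        rw [hhom]
        rfl
      -- the smaller determinants
      have hl10 : lam 1 ≤ lam 0 := hlam (Fin.zero_le 1)
      have hNE' : ∀ j : Fin n, sEE n (fun j => lam j.succ) j ≤ lam 1 + n := by
        intro j
        have hjlt := j.isLt
        have h1le : (1 : Fin (n+1)) ≤ j.succ := by
          rw [Fin.le_def, Fin.val_one', Fin.val_succ]
          have : 1 % (n+1) = 1 := Nat.mod_eq_of_lt (by omega)
          omega
        have := hlam h1le
        simp only [sEE]
        omega
      have hPhiA : sPhi K n (sdet (n+1) (lam 0 + (n+1)) lam K)
          = -((∏ i, X i) ^ (lam 0 + (n+1) - (lam 1 + n))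
              * sdet n (lam 1 + n) (fun j => lam j.succ) K) := by
        apply sPhi_sdet
        · simp [sEE]
        · intro j hj
          have hj' : 0 < (j : ℕ) := Fin.pos_of_ne_zero hj
          have h1 := j.isLt
          have h2 := hlam (Fin.zero_le j)
          simp only [sEE]
          omega
        · intro j
          have := j.isLt
          simp only [sEE, Fin.val_succ]
          omega
        · exact hNE'
        · omega
      have hevb : eval x (sdet (n+1) (n+1) (fun _ => 0) K)
          = -((∏ i : Fin n, x i.succ) * eval (fun i : Fin n => x i.succ)
              (sdet n n (fun _ => 0) K)) := by
        rw [hcomm _, sPhiB_eq n, map_neg, map_mul, map_pow, map_prod]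
        simp
      have heva : eval x (sdet (n+1) (lam 0 + (n+1)) lam K)
          = -((∏ i : Fin n, x i.succ) ^ (lam 0 + (n+1) - (lam 1 + n))
              * eval (fun i : Fin n => x i.succ)
                (sdet n (lam 1 + n) (fun j => lam j.succ) K)) := by
        rw [hcomm _, hPhiA, map_neg, map_mul, map_pow, map_prod]
        simp
      have hNE0' : ∀ j : Fin n, sEE n (fun _ => 0) j ≤ n := by
        intro j; have := j.isLt; simp only [sEE]; omega
      have heb' : eval (fun i : Fin n => x i.succ) (sdet n n (fun _ => 0) K)
          = (∏ i : Fin n, x i.succ) ^ n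
            * (spEvenMat n (fun _ => 0) (fun i : Fin n => x i.succ)).det :=
        eval_sdet n n _ hNE0' _ hx'ne
      have hea' : eval (fun i : Fin n => x i.succ) (sdet n (lam 1 + n) (fun j => lam j.succ) K)
          = (∏ i : Fin n, x i.succ) ^ (lam 1 + n)
            * (spEvenMat n (fun j => lam j.succ) (fun i : Fin n => x i.succ)).det :=
        eval_sdet n (lam 1 + n) _ hNE' _ hx'ne
      have hbne' : eval (fun i : Fin n => x i.succ) (sdet n n (fun _ => 0) K) ≠ 0 := by
        rw [heb']
        exact mul_ne_zero (pow_ne_zero _ hprod') hden'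
      have hevbne : eval x (sdet (n+1) (n+1) (fun _ => 0) K) ≠ 0 := by
        rw [hevb]
        exact neg_ne_zero.mpr (mul_ne_zero hprod' hbne')
      have hevprod : eval x (∏ i : Fin (n+1), (X i : MvPolynomial (Fin (n+1)) K))
          = ∏ i, x i := by
        rw [map_prod]; simp
      have heval : eval x (C γ⁻¹ * ((∏ i, X i) ^ (r - lam 0) * q))
            * eval x (sdet (n+1) (n+1) (fun _ => 0) K)
          = (∏ i, x i) ^ (r - lam 0) * eval x (sdet (n+1) (lam 0 + (n+1)) lam K) := by
        have h2 : eval x ((∏ i, X i) ^ (r - lam 0) * sdet (n+1) (lam 0 + (n+1)) lam K)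
            = (∏ i, x i) ^ (r - lam 0) * eval x (sdet (n+1) (lam 0 + (n+1)) lam K) := by
          rw [map_mul, map_pow, hevprod]
        exact (map_mul (eval x) _ _).symm.trans ((congrArg (eval x) hPb).trans h2)
      have hprod0 : (∏ i : Fin (n+1), x i) = 0 :=
        Finset.prod_eq_zero (Finset.mem_univ 0) hx0
      by_cases hcase : lam 0 = r
      · rw [if_pos hcase]
        have he0 : r - lam 0 = 0 := by omega
        have hone : ((∏ i : Fin (n+1), x i) : K) ^ (r - lam 0) = 1 := by
          rw [he0, pow_zero]
        rw [hone, one_mul, hevb, heva, mul_neg] at heval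
        have heval2 : eval x (C γ⁻¹ * ((∏ i, X i) ^ (r - lam 0) * q))
              * ((∏ i : Fin n, x i.succ) * eval (fun i : Fin n => x i.succ)
                (sdet n n (fun _ => 0) K))
            = (∏ i : Fin n, x i.succ) ^ (lam 0 + (n+1) - (lam 1 + n))
              * eval (fun i : Fin n => x i.succ)
                (sdet n (lam 1 + n) (fun j => lam j.succ) K) :=
          neg_injective heval
        rw [heb', hea'] at heval2
        have key : eval x (C γ⁻¹ * ((∏ i, X i) ^ (r - lam 0) * q))
              * (spEvenMat n (fun _ => 0) (fun i : Fin n => x i.succ)).det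
            = (∏ i : Fin n, x i.succ) ^ r
              * (spEvenMat n (fun j => lam j.succ) (fun i : Fin n => x i.succ)).det := by
          apply mul_left_cancel₀ (pow_ne_zero (n+1) hprod')
          calc (∏ i : Fin n, x i.succ) ^ (n+1)
                * (eval x (C γ⁻¹ * ((∏ i, X i) ^ (r - lam 0) * q))
                  * (spEvenMat n (fun _ => 0) (fun i : Fin n => x i.succ)).det)
              = eval x (C γ⁻¹ * ((∏ i, X i) ^ (r - lam 0) * q))
                * ((∏ i : Fin n, x i.succ) * ((∏ i : Fin n, x i.succ) ^ n
                  * (spEvenMat n (fun _ => 0) (fun i : Fin n => x i.succ)).det)) := by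
                ring
            _ = (∏ i : Fin n, x i.succ) ^ (lam 0 + (n+1) - (lam 1 + n))
                * ((∏ i : Fin n, x i.succ) ^ (lam 1 + n)
                  * (spEvenMat n (fun j => lam j.succ) (fun i : Fin n => x i.succ)).det) :=
                heval2
            _ = (∏ i : Fin n, x i.succ) ^ (n+1) * ((∏ i : Fin n, x i.succ) ^ r
                * (spEvenMat n (fun j => lam j.succ) (fun i : Fin n => x i.succ)).det) := by
                rw [← mul_assoc, ← mul_assoc, ← pow_add, ← pow_add]
                congr 2
                omega
        rw [spEven, ← mul_div_assoc, eq_div_iff hden']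
        linear_combination key
      · rw [if_neg hcase]
        have hrpos : 0 < r - lam 0 := by omega
        rw [hprod0, zero_pow (by omega), zero_mul] at heval
        exact (mul_eq_zero.mp heval).resolve_right hevbne
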